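/- Let E = (e_n : n ∈ ℕ) be a Leja sequence for the closed unit disk D with e_0 = 1. Then for every n ∈ ℕ, the set {e_0, e_1, …, e_{2^n−1}} is exactly the set of all 2^n-th roots of unity, i.e. {e_j : 0 ≤ j ≤ 2^n−1} = {z ∈ ℂ : z^{2^n} = 1}. -/

import Mathlib

open Finset

/-- `e` is a Leja sequence for the closed unit disk `D` with `e 0 = 1`: all points lie in `D`
and for every `d ≥ 1` the product `∏_{j<d} |z - e j|` over `z ∈ D` is maximized at `z = e d`. -/
def IsLejaSeq (e : ℕ → ℂ) : Prop :=
  e 0 = 1 ∧ (∀ n, ‖e n‖ ≤ 1) ∧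
    ∀ d : ℕ, 1 ≤ d → ∀ z : ℂ, ‖z‖ ≤ 1 →
      ∏ j ∈ Finset.range d, ‖z - e j‖ ≤
        ∏ j ∈ Finset.range d, ‖e d - e j‖



noncomputable def lejaF (m : ℕ) (w : ℕ → ℂ) (i : ℕ) (z : ℂ) : ℝ :=
  ‖z ^ m - 1‖ * ∏ j ∈ Finset.range i, ‖z - w j‖

lemma leja_antipodal {a b : ℂ} (ha : ‖a‖ ≤ 1) (hb : ‖b‖ ≤ 1)
    (h : 2 ≤ ‖a - b‖) : a = -b := by
  have par : Complex.normSq (a + b) + Complex.normSq (a - b)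
      = 2 * Complex.normSq a + 2 * Complex.normSq b := by
    simp [Complex.normSq_apply, Complex.add_re, Complex.add_im, Complex.sub_re, Complex.sub_im]
    ring
  have h1 : Complex.normSq a ≤ 1 := by
    have := Complex.sq_norm a; nlinarith [norm_nonneg a]
  have h2 : Complex.normSq b ≤ 1 := by
    have := Complex.sq_norm b; nlinarith [norm_nonneg b]
  have h4 : 4 ≤ Complex.normSq (a - b) := by
    have := Complex.sq_norm (a - b); nlinarith [norm_nonneg (a - b)]
  have h0 : Complex.normSq (a + b) = 0 := by
    have := Complex.normSq_nonneg (a + b); linarith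
  have := Complex.normSq_eq_zero.mp h0
  linear_combination this

lemma leja_exists_pos (m k : ℕ) (hm : 1 ≤ m) (w : ℕ → ℂ) :
    ∃ z : ℂ, ‖z‖ ≤ 1 ∧ 0 < lejaF m w k z := by
  have hbad : {r : ℝ | ∃ j ∈ Finset.range k, (r : ℂ) = w j}.Finite := by
    have hsub : {r : ℝ | ∃ j ∈ Finset.range k, (r : ℂ) = w j}
        ⊆ ⋃ j ∈ (Finset.range k : Finset ℕ), {r : ℝ | (r : ℂ) = w j} := by
      intro r hr; obtain ⟨j, hj, hrj⟩ := hr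
      exact Set.mem_biUnion hj hrj
    refine Set.Finite.subset (Set.Finite.biUnion (Finset.range k).finite_toSet ?_) hsub
    intro j _
    apply Set.Subsingleton.finite
    intro x hx y hy
    exact_mod_cast hx.trans hy.symm
  have hIoo : (Set.Ioo (0:ℝ) 1).Infinite := Set.Ioo_infinite (by norm_num)
  obtain ⟨r, hr⟩ := (hIoo.diff hbad).nonempty
  obtain ⟨⟨hr0, hr1⟩, hrb⟩ := hr
  refine ⟨(r : ℂ), ?_, ?_⟩
  · simp [Complex.norm_real, Real.norm_eq_abs, abs_of_pos hr0, le_of_lt hr1]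
  · unfold lejaF
    apply mul_pos
    · rw [norm_pos_iff]
      intro hzero
      have h1 : ((r ^ m : ℝ) : ℂ) = 1 := by push_cast; linear_combination hzero
      have h2 : (r : ℝ) ^ m = 1 := by exact_mod_cast h1
      nlinarith [pow_lt_one₀ (le_of_lt hr0) hr1 (by omega : m ≠ 0)]
    · apply Finset.prod_pos
      intro j hj
      rw [norm_pos_iff, sub_ne_zero]
      intro h
      exact hrb ⟨j, hj, h⟩

lemma leja_sq_prod (w : ℕ → ℂ) (l : ℕ)
    (hp : ∀ j, 2 * j + 1 < 2 * l → w (2 * j + 1) = - w (2 * j)) (z : ℂ) :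
    ∏ j ∈ Finset.range (2 * l), ‖z - w j‖
      = ∏ j ∈ Finset.range l, ‖z ^ 2 - (w (2 * j)) ^ 2‖ := by
  induction l with
  | zero => simp
  | succ l ih =>
    have h2 : 2 * (l + 1) = (2 * l + 1) + 1 := by ring
    rw [h2, Finset.prod_range_succ, Finset.prod_range_succ, Finset.prod_range_succ]
    rw [ih (fun j hj => hp j (by omega)), hp l (by omega)]
    have key : ‖z - w (2 * l)‖ * ‖z - - w (2 * l)‖
        = ‖z ^ 2 - (w (2 * l)) ^ 2‖ := by
      rw [← norm_mul]
      congr 1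
      ring
    rw [mul_assoc, key]

lemma leja_sq_F (n : ℕ) (w : ℕ → ℂ) (l : ℕ)
    (hp : ∀ j, 2 * j + 1 < 2 * l → w (2 * j + 1) = - w (2 * j)) (z : ℂ) :
    lejaF (2 ^ (n + 1)) w (2 * l) z = lejaF (2 ^ n) (fun j => (w (2 * j)) ^ 2) l (z ^ 2) := by
  unfold lejaF
  rw [leja_sq_prod w l hp z]
  congr 2
  rw [← pow_mul]
  congr 1
  ring

lemma leja_sq_max (n : ℕ) (w : ℕ → ℂ) (l : ℕ)
    (hp : ∀ j, 2 * j + 1 < 2 * l → w (2 * j + 1) = - w (2 * j))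
    (h1 : ‖w (2 * l)‖ ≤ 1)
    (h2 : ∀ z, ‖z‖ ≤ 1 →
      lejaF (2 ^ (n + 1)) w (2 * l) z ≤ lejaF (2 ^ (n + 1)) w (2 * l) (w (2 * l))) :
    ‖(fun j => (w (2 * j)) ^ 2) l‖ ≤ 1 ∧ ∀ ζ, ‖ζ‖ ≤ 1 →
      lejaF (2 ^ n) (fun j => (w (2 * j)) ^ 2) l ζ
        ≤ lejaF (2 ^ n) (fun j => (w (2 * j)) ^ 2) l ((fun j => (w (2 * j)) ^ 2) l) := by
  constructor
  · simp only [norm_pow]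
    calc ‖w (2 * l)‖ ^ 2 ≤ 1 ^ 2 := by
          apply pow_le_pow_left₀ (norm_nonneg _) h1
      _ = 1 := one_pow 2
  · intro ζ hζ
    obtain ⟨s, hs⟩ := IsAlgClosed.exists_pow_nat_eq ζ (n := 2) (by norm_num)
    have hsle : ‖s‖ ≤ 1 := by
      have : ‖s‖ ^ 2 ≤ 1 := by rw [← norm_pow, hs]; exact hζ
      nlinarith [norm_nonneg s]
    calc lejaF (2 ^ n) (fun j => (w (2 * j)) ^ 2) l ζ
        = lejaF (2 ^ (n + 1)) w (2 * l) s := by rw [← hs, ← leja_sq_F n w l hp]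
      _ ≤ lejaF (2 ^ (n + 1)) w (2 * l) (w (2 * l)) := h2 s hsle
      _ = _ := leja_sq_F n w l hp _

lemma leja_key : ∀ n : ℕ, ∀ w : ℕ → ℂ, ∀ k : ℕ, k ≤ 2 ^ n →
    (∀ i, i < k → ‖w i‖ ≤ 1 ∧ ∀ z, ‖z‖ ≤ 1 →
        lejaF (2 ^ n) w i z ≤ lejaF (2 ^ n) w i (w i)) →
    ∀ i, i < k → (w i) ^ (2 ^ n) = -1 ∧ (∀ j, j < i → w i ≠ w j) ∧
      (∀ l, i = 2 * l + 1 → w i = - w (2 * l)) := by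
  intro n
  induction n with
  | zero =>
    intro w k hk H i hi
    have hi0 : i = 0 := by omega
    subst hi0
    obtain ⟨h1, h2⟩ := H 0 hi
    have hle := h2 (-1) (by simp)
    have hval : lejaF (2 ^ 0) w 0 (-1) = 2 := by
      unfold lejaF
      norm_num
    have hval2 : lejaF (2 ^ 0) w 0 (w 0) = ‖w 0 - 1‖ := by
      unfold lejaF
      norm_num
    have hge : (2:ℝ) ≤ ‖w 0 - 1‖ := by
      rw [hval, hval2] at hle
      exact hle
    have hres := leja_antipodal h1 (by simp) hge
    exact ⟨by simpa using hres, fun j hj => absurd hj (by omega),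
      fun l hl => absurd hl (by omega)⟩
  | succ n IH =>
    intro w k hk H i
    induction i using Nat.strong_induction_on with
    | _ i SIH =>
    intro hi
    have hpair : ∀ j, 2 * j + 1 < i → w (2 * j + 1) = - w (2 * j) := by
      intro j hj
      exact (SIH (2 * j + 1) hj (by omega)).2.2 j rfl
    have hV : ∀ j, 2 * j ≤ i → (‖(w (2 * j)) ^ 2‖ ≤ 1 ∧ ∀ ζ, ‖ζ‖ ≤ 1 →
        lejaF (2 ^ n) (fun j' => (w (2 * j')) ^ 2) j ζ
          ≤ lejaF (2 ^ n) (fun j' => (w (2 * j')) ^ 2) j ((w (2 * j)) ^ 2)) := by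
      intro j hj
      obtain ⟨a1, a2⟩ := H (2 * j) (by omega)
      exact leja_sq_max n w j (fun j' hj' => hpair j' (by omega)) a1 a2
    have h2pow : (2:ℕ) ^ (n + 1) = 2 * 2 ^ n := by ring
    rcases Nat.even_or_odd i with ⟨l, hl⟩ | ⟨l, hl⟩
    · -- even : i = l + l
      have hl2 : i = 2 * l := by omega
      have hIH := IH (fun j' => (w (2 * j')) ^ 2) (l + 1) (by omega)
        (fun i' hi' => hV i' (by omega))
      have hIHl := hIH l (by omega)
      have hsq : ∀ j', j' < i → (w j') ^ 2 = (w (2 * (j' / 2))) ^ 2 := by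
        intro j' hj'
        rcases Nat.even_or_odd j' with ⟨a, ha⟩ | ⟨a, ha⟩
        · have : 2 * (j' / 2) = j' := by omega
          rw [this]
        · have ha2 : j' = 2 * a + 1 := by omega
          have := hpair a (by omega)
          have hdiv : j' / 2 = a := by omega
          rw [hdiv, ha2, this, neg_sq]
      refine ⟨?_, ?_, ?_⟩
      · rw [hl2, h2pow, pow_mul]
        exact hIHl.1
      · intro j hj heq
        have hjl : j / 2 < l := by omega
        have : (w i) ^ 2 = (w (2 * (j / 2))) ^ 2 := by rw [heq]; exact hsq j hj
        rw [hl2] at this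
        exact hIHl.2.1 (j / 2) hjl this
      · intro l' hl'
        omega
    · -- odd : i = 2 * l + 1
      have hW := SIH (2 * l) (by omega) (by omega)
      have hWm : (w (2 * l)) ^ (2 ^ (n + 1)) = -1 := hW.1
      have hW0 : w (2 * l) ≠ 0 := by
        intro h
        rw [h, zero_pow (by positivity)] at hWm
        exact absurd hWm.symm (by norm_num)
      obtain ⟨hb1, hb2⟩ := H (2 * l) (by omega)
      have hW1 : ‖w (2 * l)‖ = 1 := by
        have habs : ‖w (2 * l)‖ ^ (2 ^ (n + 1)) = 1 := by
          rw [← norm_pow, hWm]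
          simp
        by_contra hne
        have hlt : ‖w (2 * l)‖ < 1 := lt_of_le_of_ne hb1 hne
        have := pow_lt_one₀ (norm_nonneg _) hlt
          (pow_ne_zero (n + 1) (by norm_num : (2:ℕ) ≠ 0))
        rw [habs] at this
        exact lt_irrefl 1 this
      obtain ⟨z0, hz0, hz0pos⟩ := leja_exists_pos (2 ^ (n + 1)) (2 * l)
        (Nat.one_le_pow _ _ (by norm_num)) w
      have hM : 0 < lejaF (2 ^ (n + 1)) w (2 * l) (w (2 * l)) :=
        lt_of_lt_of_le hz0pos (hb2 z0 hz0)
      have hp' : ∀ j, 2 * j + 1 < 2 * l → w (2 * j + 1) = - w (2 * j) :=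
        fun j hj => hpair j (by omega)
      have hFeven : lejaF (2 ^ (n + 1)) w (2 * l) (-(w (2 * l)))
          = lejaF (2 ^ (n + 1)) w (2 * l) (w (2 * l)) := by
        rw [leja_sq_F n w l hp' (-(w (2 * l))), leja_sq_F n w l hp' (w (2 * l)), neg_sq]
      have hsplit : ∀ z : ℂ, lejaF (2 ^ (n + 1)) w i z
          = lejaF (2 ^ (n + 1)) w (2 * l) z * ‖z - w (2 * l)‖ := by
        intro z
        unfold lejaF
        rw [hl, Finset.prod_range_succ]
        ring
      obtain ⟨hi1, hi2⟩ := H i hi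
      have hup : lejaF (2 ^ (n + 1)) w i (w i)
          ≤ lejaF (2 ^ (n + 1)) w (2 * l) (w (2 * l)) * ‖w i - w (2 * l)‖ := by
        rw [hsplit]
        exact mul_le_mul_of_nonneg_right (hb2 (w i) hi1) (norm_nonneg _)
      have habsneg : ‖-(w (2 * l))‖ ≤ 1 := by
        rw [norm_neg, hW1]
      have hdown : 2 * lejaF (2 ^ (n + 1)) w (2 * l) (w (2 * l))
          ≤ lejaF (2 ^ (n + 1)) w i (w i) := by
        have h1 := hi2 (-(w (2 * l))) habsneg
        rw [hsplit, hFeven] at h1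
        have h2 : ‖-(w (2 * l)) - w (2 * l)‖ = 2 := by
          have e : -(w (2 * l)) - w (2 * l) = -(2 * w (2 * l)) := by ring
          rw [e, norm_neg, norm_mul, hW1, Complex.norm_two, mul_one]
        rw [h2] at h1
        linarith
      have habs2 : 2 ≤ ‖w i - w (2 * l)‖ := by
        nlinarith [hM, hup, hdown]
      have hanti : w i = -(w (2 * l)) := leja_antipodal hi1 hb1 habs2
      have hIH := IH (fun j' => (w (2 * j')) ^ 2) (l + 1) (by omega)
        (fun i' hi' => hV i' (by omega))
      have hIHl := hIH l (by omega)
      have hsq : ∀ j', j' < i → (w j') ^ 2 = (w (2 * (j' / 2))) ^ 2 := by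
        intro j' hj'
        rcases Nat.even_or_odd j' with ⟨a, ha⟩ | ⟨a, ha⟩
        · have : 2 * (j' / 2) = j' := by omega
          rw [this]
        · have ha2 : j' = 2 * a + 1 := by omega
          have := hpair a (by omega)
          have hdiv : j' / 2 = a := by omega
          rw [hdiv, ha2, this, neg_sq]
      refine ⟨?_, ?_, ?_⟩
      · rw [hanti, Even.neg_pow ⟨2 ^ n, by rw [h2pow]; ring⟩, hWm]
      · intro j hj heq
        rcases eq_or_lt_of_le (by omega : j ≤ 2 * l) with hj2 | hj2
        · rw [hj2] at heq
          rw [heq] at hanti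
          exact hW0 (by linear_combination hanti / 2)
        · have hjl : j / 2 < l := by omega
          have hvei : (w i) ^ 2 = (w (2 * l)) ^ 2 := by rw [hanti, neg_sq]
          have : (w (2 * l)) ^ 2 = (w (2 * (j / 2))) ^ 2 := by
            rw [← hvei, heq]
            exact hsq j (by omega)
          exact hIHl.2.1 (j / 2) hjl this
      · intro l' hl'
        have : l' = l := by omega
        rw [this]
        exact hanti

lemma leja_image_eq (e : ℕ → ℂ) (n : ℕ)
    (hpow : ∀ j, j < 2 ^ n → (e j) ^ (2 ^ n) = 1)
    (hinj : ∀ i, i < 2 ^ n → ∀ j, j < i → e i ≠ e j) :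
    (Finset.range (2 ^ n)).image e = Polynomial.nthRootsFinset (2 ^ n) (1 : ℂ) := by
  have hp : 0 < 2 ^ n := by positivity
  have hsub : (Finset.range (2 ^ n)).image e ⊆ Polynomial.nthRootsFinset (2 ^ n) (1 : ℂ) := by
    intro x hx
    obtain ⟨j, hj, rfl⟩ := Finset.mem_image.mp hx
    rw [Polynomial.mem_nthRootsFinset hp]
    exact hpow j (Finset.mem_range.mp hj)
  have hcard : ((Finset.range (2 ^ n)).image e).card = 2 ^ n := by
    rw [Finset.card_image_of_injOn, Finset.card_range]
    intro a ha b hb hab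
    by_contra hne
    rcases lt_or_gt_of_ne hne with h | h
    · exact hinj b (Finset.mem_range.mp hb) a h hab.symm
    · exact hinj a (Finset.mem_range.mp ha) b h hab
  have hcard2 : (Polynomial.nthRootsFinset (2 ^ n) (1 : ℂ)).card = 2 ^ n :=
    (Complex.isPrimitiveRoot_exp (2 ^ n) (by positivity)).card_nthRootsFinset
  exact Finset.eq_of_subset_of_card_le hsub (by rw [hcard, hcard2])

lemma leja_prod_eq (e : ℕ → ℂ) (n : ℕ)
    (hpow : ∀ j, j < 2 ^ n → (e j) ^ (2 ^ n) = 1)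
    (hinj : ∀ i, i < 2 ^ n → ∀ j, j < i → e i ≠ e j) (z : ℂ) :
    ∏ j ∈ Finset.range (2 ^ n), (z - e j) = z ^ (2 ^ n) - 1 := by
  have hp : 0 < 2 ^ n := by positivity
  have him := leja_image_eq e n hpow hinj
  have hinjOn : ∀ a ∈ Finset.range (2 ^ n), ∀ b ∈ Finset.range (2 ^ n), e a = e b → a = b := by
    intro a ha b hb hab
    by_contra hne
    rcases lt_or_gt_of_ne hne with h | h
    · exact hinj b (Finset.mem_range.mp hb) a h hab.symm
    · exact hinj a (Finset.mem_range.mp ha) b h hab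
  have h1 : ∏ x ∈ (Finset.range (2 ^ n)).image e, (z - x)
      = ∏ j ∈ Finset.range (2 ^ n), (z - e j) := Finset.prod_image hinjOn
  rw [← h1, him]
  have h2 := Polynomial.X_pow_sub_one_eq_prod hp (Complex.isPrimitiveRoot_exp (2 ^ n) (by positivity))
  have h3 := congrArg (Polynomial.eval z) h2
  simpa [Polynomial.eval_prod] using h3.symm

lemma leja_main (e : ℕ → ℂ) (he : IsLejaSeq e) (n : ℕ) :
    (∀ j, j < 2 ^ n → (e j) ^ (2 ^ n) = 1) ∧ (∀ i, i < 2 ^ n → ∀ j, j < i → e i ≠ e j) := by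
  obtain ⟨h0, hD, hmax⟩ := he
  induction n with
  | zero =>
    refine ⟨?_, ?_⟩
    · intro j hj
      have hj0 : j = 0 := by omega
      rw [hj0, h0, one_pow]
    · intro i hi j hj
      omega
  | succ n IH =>
    obtain ⟨hpow, hinj⟩ := IH
    have hp : 0 < 2 ^ n := by positivity
    have habs : ∀ z : ℂ, ∏ j ∈ Finset.range (2 ^ n), ‖z - e j‖
        = ‖z ^ (2 ^ n) - 1‖ := by
      intro z
      rw [← leja_prod_eq e n hpow hinj z]
      exact (Complex.norm_prod _ _).symm
    have hH : ∀ i, i < 2 ^ n → ‖(fun j => e (2 ^ n + j)) i‖ ≤ 1 ∧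
        ∀ z, ‖z‖ ≤ 1 →
          lejaF (2 ^ n) (fun j => e (2 ^ n + j)) i z
            ≤ lejaF (2 ^ n) (fun j => e (2 ^ n + j)) i ((fun j => e (2 ^ n + j)) i) := by
      intro i hilt
      refine ⟨hD _, ?_⟩
      intro z hz
      have hineq := hmax (2 ^ n + i) (by omega) z hz
      rw [Finset.prod_range_add, Finset.prod_range_add] at hineq
      unfold lejaF
      rw [← habs z, ← habs (e (2 ^ n + i))]
      exact hineq
    have hkey := leja_key n (fun j => e (2 ^ n + j)) (2 ^ n) le_rfl hH
    have h2succ : (2:ℕ) ^ (n + 1) = 2 ^ n * 2 := by ring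
    refine ⟨?_, ?_⟩
    · intro j hj
      rcases lt_or_ge j (2 ^ n) with h | h
      · rw [h2succ, pow_mul, hpow j h, one_pow]
      · obtain ⟨i, rfl⟩ : ∃ i, j = 2 ^ n + i := ⟨j - 2 ^ n, by omega⟩
        have hilt : i < 2 ^ n := by
          have := hj
          rw [h2succ] at this
          omega
        have hkeyi := (hkey i hilt).1
        rw [h2succ, pow_mul, hkeyi]
        norm_num
    · intro i hi j hj
      rcases lt_or_ge i (2 ^ n) with h1 | h1
      · exact hinj i h1 j hj
      · obtain ⟨a, rfl⟩ : ∃ a, i = 2 ^ n + a := ⟨i - 2 ^ n, by omega⟩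
        have halt : a < 2 ^ n := by
          rw [h2succ] at hi
          omega
        rcases lt_or_ge j (2 ^ n) with h2 | h2
        · intro heq
          have ha := (hkey a halt).1
          rw [heq, hpow j h2] at ha
          exact absurd ha.symm (by norm_num)
        · obtain ⟨b, rfl⟩ : ∃ b, j = 2 ^ n + b := ⟨j - 2 ^ n, by omega⟩
          have hba : b < a := by omega
          have := (hkey a halt).2.1 b hba
          simpa using this

theorem stmt8 (e : ℕ → ℂ) (he : IsLejaSeq e) (n : ℕ) :
    {z : ℂ | ∃ j < 2 ^ n, e j = z} = {z : ℂ | z ^ (2 ^ n) = 1} := by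
  obtain ⟨hpow, hinj⟩ := leja_main e he n
  have hp : 0 < 2 ^ n := by positivity
  have him := leja_image_eq e n hpow hinj
  ext z
  simp only [Set.mem_setOf_eq]
  constructor
  · rintro ⟨j, hj, rfl⟩
    exact hpow j hj
  · intro hz
    have hmem : z ∈ Polynomial.nthRootsFinset (2 ^ n) (1 : ℂ) :=
      (Polynomial.mem_nthRootsFinset hp (1 : ℂ)).mpr hz
    rw [← him] at hmem
    obtain ⟨j, hj, hjz⟩ := Finset.mem_image.mp hmem
    exact ⟨j, Finset.mem_range.mp hj, hjz⟩
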